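/- (Likelihood-ratio representation of the Black–Scholes Delta, Eq. (bs_delta).) Let h : (0,∞) → ℝ be measurable with |h(y)| ≤ C(1 + y) for some C ≥ 0, and let r ∈ ℝ, v > 0, τ > 0. Set μ = (r − v/2)τ and let γ be the Gaussian measure on ℝ with mean μ and variance vτ. Then the function u(x) := e^{−rτ} ∫_ℝ h(x·e^z) γ(dz) is differentiable on (0,∞) and u'(x) = e^{−rτ} ∫_ℝ ((z − μ)/(x·v·τ)) · h(x·e^z) γ(dz) for every x > 0. -/

import Mathlib

open MeasureTheory ProbabilityTheory Real

lemma int_exp_gauss {β : ℝ} (hβ : 0 < β) (b m : ℝ) :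
    Integrable (fun w : ℝ => Real.exp (b * w) * Real.exp (-β * (w - m) ^ 2)) := by
  have h1 : Integrable (fun t : ℝ => Real.exp (-β * t ^ 2)) := integrable_exp_neg_mul_sq hβ
  have h2 := (h1.comp_sub_right (m + b / (2 * β))).const_mul (Real.exp (b * m + b ^ 2 / (4 * β)))
  refine h2.congr (Filter.Eventually.of_forall fun w => ?_)
  simp only []
  rw [← Real.exp_add, ← Real.exp_add]
  congr 1
  field_simp
  ring

lemma int_bound {β : ℝ} (hβ : 0 < β) (m : ℝ) :
    Integrable (fun w : ℝ =>
      (1 + Real.exp w) * (Real.exp (w - m) + Real.exp (-(w - m))) * Real.exp (-β * (w - m) ^ 2)) := by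
  have e1 := (int_exp_gauss hβ 1 m).const_mul (Real.exp (-m))
  have e2 := (int_exp_gauss hβ (-1) m).const_mul (Real.exp m)
  have e3 := (int_exp_gauss hβ 2 m).const_mul (Real.exp (-m))
  have e4 := (int_exp_gauss hβ 0 m).const_mul (Real.exp m)
  refine (((e1.add e2).add e3).add e4).congr (Filter.Eventually.of_forall fun w => ?_)
  have hE : Real.exp w ≠ 0 := (Real.exp_pos w).ne'
  have hM : Real.exp m ≠ 0 := (Real.exp_pos m).ne'
  simp only [Pi.add_apply]
  rw [Real.exp_sub, show -(w - m) = m - w by ring, Real.exp_sub, one_mul, neg_one_mul,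
    Real.exp_neg w, Real.exp_neg m, show (2:ℝ) * w = w + w by ring, Real.exp_add, zero_mul,
    Real.exp_zero]
  field_simp
  ring


set_option maxHeartbeats 1000000 in
/-- **Likelihood-ratio representation of the Black–Scholes Delta.**
Let `h : (0,∞) → ℝ` be measurable with `|h y| ≤ C (1 + y)`, let `r ∈ ℝ`, `v > 0`, `τ > 0`,
`μ = (r − v/2) τ`, and let `γ` be the Gaussian measure on `ℝ` with mean `μ` and variance `v τ`.
Then `u x := e^{−rτ} ∫ h(x e^z) γ(dz)` is differentiable on `(0,∞)` with derivative
`u' x = e^{−rτ} ∫ ((z − μ)/(x v τ)) h(x e^z) γ(dz)`. -/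
theorem bs_delta_likelihood_ratio
    (h : ℝ → ℝ) (hmeas : Measurable h)
    (C : ℝ) (hC : 0 ≤ C) (hbound : ∀ y : ℝ, 0 < y → |h y| ≤ C * (1 + y))
    (r v τ : ℝ) (hv : 0 < v) (hτ : 0 < τ) :
    ∀ x : ℝ, 0 < x →
      HasDerivAt
        (fun x : ℝ => Real.exp (-(r * τ)) *
          ∫ z, h (x * Real.exp z)
            ∂(gaussianReal ((r - v / 2) * τ) ((v * τ).toNNReal)))
        (Real.exp (-(r * τ)) *
          ∫ z, ((z - (r - v / 2) * τ) / (x * v * τ)) * h (x * Real.exp z)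
            ∂(gaussianReal ((r - v / 2) * τ) ((v * τ).toNNReal))) x := by
  intro x hx
  set μ₀ : ℝ := (r - v / 2) * τ with hμ₀
  set s : ℝ := v * τ with hsdef
  have hs : 0 < s := mul_pos hv hτ
  set V : NNReal := s.toNNReal with hVdef
  have hVs : (V : ℝ) = s := Real.coe_toNNReal s hs.le
  have hVne : V ≠ 0 := by
    simp only [hVdef, ne_eq, Real.toNNReal_eq_zero, not_le]
    exact hs
  set c : ℝ := (Real.sqrt (2 * π * s))⁻¹ with hcdef
  have hc : 0 < c := by
    rw [hcdef]
    positivity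
  set p : ℝ → ℝ := gaussianPDFReal μ₀ V with hpdef
  have hp : ∀ t : ℝ, p t = c * Real.exp (-(t - μ₀) ^ 2 / (2 * s)) := by
    intro t
    rw [hpdef, gaussianPDFReal, hVs]
  have hpnn : ∀ t, 0 ≤ p t := fun t => gaussianPDFReal_nonneg _ _ t
  have hpmeas : Measurable p := measurable_gaussianPDFReal _ _
  -- density representation of integrals against the gaussian measure
  have key : ∀ g : ℝ → ℝ,
      ∫ z, g z ∂(gaussianReal μ₀ V) = ∫ z, p z * g z := by
    intro g
    rw [gaussianReal_of_var_ne_zero _ hVne]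
    have hd : (gaussianPDF μ₀ V) = fun z => ((fun z => (p z).toNNReal) z : ENNReal) := by
      funext z
      rw [gaussianPDF_def]
      rfl
    rw [hd, integral_withDensity_eq_integral_smul (hpmeas.real_toNNReal) g]
    congr 1
    funext z
    rw [NNReal.smul_def, Real.coe_toNNReal _ (hpnn z), smul_eq_mul]
  -- the derivative of the pdf
  have hpderiv : ∀ t : ℝ, HasDerivAt p (p t * ((μ₀ - t) / s)) t := by
    intro t
    have hg : HasDerivAt (fun t : ℝ => -(t - μ₀) ^ 2 / (2 * s)) ((μ₀ - t) / s) t := by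
      have h1 : HasDerivAt (fun t : ℝ => -(t - μ₀) ^ 2 / (2 * s))
          (-(2 * (t - μ₀) ^ 1 * 1) / (2 * s)) t :=
        (((hasDerivAt_id t).sub_const μ₀).pow 2).neg.div_const (2 * s)
      convert h1 using 1
      field_simp
      ring
    have h2 := (hg.exp.const_mul c)
    have : (fun t : ℝ => c * Real.exp (-(t - μ₀) ^ 2 / (2 * s))) = p := by
      funext t; rw [hp t]
    rw [this] at h2
    refine h2.congr_deriv ?_
    rw [hp t]
    ring
  -- the family and its derivative
  set F : ℝ → ℝ → ℝ := fun y w => h (Real.exp w) * p (w - Real.log y) with hFdef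
  set F' : ℝ → ℝ → ℝ := fun y w =>
    h (Real.exp w) * (p (w - Real.log y) * ((μ₀ - (w - Real.log y)) / s) * -y⁻¹) with hF'def
  -- translation identities
  have heqF : ∀ y : ℝ, 0 < y →
      ∫ z, h (y * Real.exp z) ∂(gaussianReal μ₀ V) = ∫ w, F y w := by
    intro y hy
    rw [key]
    rw [← integral_sub_right_eq_self (fun z => p z * h (y * Real.exp z)) (Real.log y)]
    congr 1
    funext w
    have : y * Real.exp (w - Real.log y) = Real.exp w := by
      rw [Real.exp_sub, Real.exp_log hy]
      field_simp
    rw [this, mul_comm]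
  have heqF' :
      ∫ z, ((z - μ₀) / (x * v * τ)) * h (x * Real.exp z) ∂(gaussianReal μ₀ V)
        = ∫ w, F' x w := by
    rw [key]
    rw [← integral_sub_right_eq_self
      (fun z => p z * (((z - μ₀) / (x * v * τ)) * h (x * Real.exp z))) (Real.log x)]
    congr 1
    funext w
    have hxe : x * Real.exp (w - Real.log x) = Real.exp w := by
      rw [Real.exp_sub, Real.exp_log hx]
      field_simp
    rw [hxe, hF'def]
    simp only []
    rw [hsdef]
    field_simp
    ring
  -- the dominated-derivative argument
  set m : ℝ := Real.log x + μ₀ with hmdef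
  set β : ℝ := 1 / (4 * s) with hβdef
  have hβ : 0 < β := by rw [hβdef]; positivity
  set K : ℝ := C * c * Real.exp (1 / (2 * s)) * (2 / (s * x)) with hKdef
  have hKnn : 0 ≤ K := by rw [hKdef]; positivity
  set B : ℝ → ℝ := fun w => K * ((1 + Real.exp w) *
    (Real.exp (w - m) + Real.exp (-(w - m))) * Real.exp (-β * (w - m) ^ 2)) with hBdef
  have hmain :
      HasDerivAt (fun y => ∫ w, F y w) (∫ w, F' x w) x := by
    have hball : ∀ x' ∈ Metric.ball x (x / 2), x / 2 < x' ∧ x' < 3 * x / 2 := by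
      intro x' hx'
      rw [Metric.mem_ball, Real.dist_eq, abs_lt] at hx'
      constructor <;> linarith [hx'.1, hx'.2]
    refine (hasDerivAt_integral_of_dominated_loc_of_deriv_le (s := Metric.ball x (x / 2)) (bound := B)
      (Metric.ball_mem_nhds x (by positivity)) ?_ ?_ ?_ ?_ ?_ ?_).2
    · refine Filter.Eventually.of_forall fun y => ?_
      exact ((hmeas.comp Real.measurable_exp).mul
        (hpmeas.comp (measurable_id.sub_const (Real.log y)))).aestronglyMeasurable
    · -- integrability of F x
      refine Integrable.mono' (((int_bound (by positivity : (0:ℝ) < 1 / (2 * s)) m).const_mul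
        (C * c))) ?_ (Filter.Eventually.of_forall fun w => ?_)
      · exact ((hmeas.comp Real.measurable_exp).mul
          (hpmeas.comp (measurable_id.sub_const (Real.log x)))).aestronglyMeasurable
      · have hu : w - Real.log x - μ₀ = w - m := by rw [hmdef]; ring
        have h1 : |h (Real.exp w)| ≤ C * (1 + Real.exp w) := hbound _ (Real.exp_pos w)
        have h2 : p (w - Real.log x) = c * Real.exp (-(w - m) ^ 2 / (2 * s)) := by
          rw [hp, ← hu]
        have h3 : Real.exp (-(w - m) ^ 2 / (2 * s))
            ≤ (Real.exp (w - m) + Real.exp (-(w - m))) *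
              Real.exp (-(1 / (2 * s)) * (w - m) ^ 2) := by
          have hle : Real.exp (-(w - m) ^ 2 / (2 * s))
              = Real.exp (-(1 / (2 * s)) * (w - m) ^ 2) := by
            congr 1; field_simp
          rw [hle]
          nlinarith [Real.exp_pos (w - m), Real.exp_pos (-(w - m)),
            Real.exp_pos (-(1 / (2 * s)) * (w - m) ^ 2),
            Real.add_one_le_exp (w - m), Real.add_one_le_exp (-(w - m))]
        calc ‖F x w‖ = |h (Real.exp w)| * p (w - Real.log x) := by
              rw [hFdef]
              simp only []
              rw [Real.norm_eq_abs, abs_mul, abs_of_nonneg (hpnn _)]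
          _ ≤ (C * (1 + Real.exp w)) * (c * ((Real.exp (w - m) + Real.exp (-(w - m))) *
              Real.exp (-(1 / (2 * s)) * (w - m) ^ 2))) := by
              rw [h2]
              have := mul_le_mul h1 (by
                have := mul_le_mul_of_nonneg_left h3 hc.le
                linarith : c * Real.exp (-(w - m) ^ 2 / (2 * s))
                  ≤ c * ((Real.exp (w - m) + Real.exp (-(w - m))) *
                    Real.exp (-(1 / (2 * s)) * (w - m) ^ 2)))
                (by positivity) (by positivity)
              linarith
          _ = C * c * ((1 + Real.exp w) * (Real.exp (w - m) + Real.exp (-(w - m))) *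
              Real.exp (-(1 / (2 * s)) * (w - m) ^ 2)) := by ring
    · -- measurability of F' x
      exact ((hmeas.comp Real.measurable_exp).mul
        ((((hpmeas.comp (measurable_id.sub_const (Real.log x))).mul
          ((measurable_const.sub (measurable_id.sub_const (Real.log x))).div_const s)).mul
          measurable_const))).aestronglyMeasurable
    · -- the bound
      refine Filter.Eventually.of_forall fun w => fun x' hx' => ?_
      obtain ⟨hl, hr⟩ := hball x' hx'
      have hx'pos : 0 < x' := lt_trans (by positivity) hl
      set a : ℝ := Real.log x' - Real.log x with hadef
      have ha : |a| ≤ 1 := by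
        rw [abs_le]
        constructor
        · have : Real.log x - Real.log x' = Real.log (x / x') := (Real.log_div hx.ne' hx'pos.ne').symm
          have h4 : Real.log (x / x') ≤ x / x' - 1 := Real.log_le_sub_one_of_pos (by positivity)
          have h5 : x / x' ≤ 2 := by
            rw [div_le_iff₀ hx'pos]; linarith
          rw [hadef]; linarith [this ▸ h4]
        · have : Real.log x' - Real.log x = Real.log (x' / x) := (Real.log_div hx'pos.ne' hx.ne').symm
          have h4 : Real.log (x' / x) ≤ x' / x - 1 := Real.log_le_sub_one_of_pos (by positivity)
          have h5 : x' / x ≤ 2 := by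
            rw [div_le_iff₀ hx]; linarith
          rw [hadef]; linarith [this ▸ h4]
      set u : ℝ := w - m with hudef
      set t : ℝ := w - Real.log x' - μ₀ with htdef
      have hut : u - t = a := by rw [hudef, htdef, hadef, hmdef]; ring
      have ha2 : a ^ 2 ≤ 1 := by nlinarith [abs_le.mp ha]
      clear_value u t a
      -- |F' x' w| in factored form
      have habs : |F' x' w| = |h (Real.exp w)| * (p (w - Real.log x') * (|t| / s) * x'⁻¹) := by
        rw [hF'def]
        simp only []
        rw [abs_mul, abs_mul, abs_mul, abs_neg, abs_inv, abs_of_pos hx'pos,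
          abs_of_nonneg (hpnn _), abs_div, abs_of_pos hs]
        congr 3
        rw [htdef, abs_sub_comm]
      have hP : p (w - Real.log x') ≤ c * Real.exp (1 / (2 * s)) * Real.exp (-β * u ^ 2) := by
        rw [hp]
        have he : w - Real.log x' - μ₀ = t := htdef.symm
        rw [show (-(w - Real.log x' - μ₀) ^ 2 / (2 * s)) = -t ^ 2 / (2 * s) by rw [he]]
        rw [mul_assoc, ← Real.exp_add]
        refine mul_le_mul_of_nonneg_left (Real.exp_le_exp.mpr ?_) hc.le
        rw [hβdef]
        have hu2 : u = t + a := by linarith [hut]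
        have hu3 : u ^ 2 = (t + a) ^ 2 := by rw [hu2]
        have key2 : u ^ 2 / 2 ≤ 1 + t ^ 2 := by nlinarith [hu3, sq_nonneg (t - a), ha2]
        have h2s : (0:ℝ) < 2 * s := by positivity
        have heq2 : 1 / (2 * s) + -(1 / (4 * s)) * u ^ 2 = (1 - u ^ 2 / 2) / (2 * s) := by
          field_simp; ring
        rw [heq2, div_le_div_iff₀ h2s h2s]
        nlinarith
      have hT : |t| ≤ Real.exp u + Real.exp (-u) := by
        have h1 : |t| ≤ |u| + 1 := by
          have : t = u - a := by linarith [hut]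
          rw [this]
          calc |u - a| ≤ |u| + |a| := abs_sub _ _
            _ ≤ |u| + 1 := by linarith
        have h2 : |u| + 1 ≤ Real.exp |u| := Real.add_one_le_exp |u|
        have h3 : Real.exp |u| ≤ Real.exp u + Real.exp (-u) := by
          rcases abs_cases u with ⟨hcase, _⟩ | ⟨hcase, _⟩ <;> rw [hcase]
          · linarith [Real.exp_pos (-u)]
          · linarith [Real.exp_pos u]
        linarith
      have hxinv : x'⁻¹ ≤ 2 / x := by
        have : x / 2 ≤ x' := hl.le
        calc x'⁻¹ ≤ (x / 2)⁻¹ := by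
              apply inv_anti₀ (by positivity) this
          _ = 2 / x := by rw [inv_div]
      have hPnn := hpnn (w - Real.log x')
      have hh1 := hbound _ (Real.exp_pos w)
      rw [Real.norm_eq_abs, habs]
      calc |h (Real.exp w)| * (p (w - Real.log x') * (|t| / s) * x'⁻¹)
          ≤ (C * (1 + Real.exp w)) * ((c * Real.exp (1 / (2 * s)) * Real.exp (-β * u ^ 2)) *
            ((Real.exp u + Real.exp (-u)) / s) * (2 / x)) := by
            gcongr
        _ = B w := by
            rw [hBdef]
            simp only []
            rw [hKdef, hudef]
            ring
    · -- integrability of the bound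
      exact (int_bound hβ m).const_mul K
    · -- differentiability
      refine Filter.Eventually.of_forall fun w => fun x' hx' => ?_
      obtain ⟨hl, _⟩ := hball x' hx'
      have hx'pos : 0 < x' := lt_trans (by positivity) hl
      have hlog : HasDerivAt (fun y : ℝ => w - Real.log y) (-x'⁻¹) x' :=
        (Real.hasDerivAt_log hx'pos.ne').const_sub w
      have hcomp := ((hpderiv (w - Real.log x')).comp x' hlog).const_mul (h (Real.exp w))
      exact hcomp
  -- assemble
  have hfinal := hmain.const_mul (Real.exp (-(r * τ)))
  rw [← heqF'] at hfinal
  refine hfinal.congr_of_eventuallyEq ?_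
  filter_upwards [(isOpen_Ioi (a := (0:ℝ))).eventually_mem hx] with y hy
  rw [heqF y hy]
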